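/- The generating function for s-distinct 2-flat partitions is ∑_{k≥0} q^{k(k+1)/2} · (q^{s-1};q^{s-1})_k / (q;q)_k, i.e., the number of partitions of n in which every part from 1 up to some k appears at least once and at most s-1 times equals the coefficient of q^n in this sum. -/

import Mathlib

/-- A partition is `m`-regular if no part is divisible by `m`. -/
def Nat.Partition.IsRegular {n : ℕ} (m : ℕ) (P : n.Partition) : Prop :=
  ∀ a ∈ P.parts, ¬ m ∣ a

/-- A partition is `m`-distinct if every part appears fewer than `m` times. -/
def Nat.Partition.IsDistinct {n : ℕ} (m : ℕ) (P : n.Partition) : Prop :=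
  ∀ a, P.parts.count a < m

/-- A partition is `m`-flat if consecutive parts differ by less than `m` and the
smallest part is less than `m`; equivalently, every part is either less than `m`
or within less than `m` of some strictly smaller part. -/
def Nat.Partition.IsFlat {n : ℕ} (m : ℕ) (P : n.Partition) : Prop :=
  ∀ a ∈ P.parts, a < m ∨ ∃ b ∈ P.parts, b < a ∧ a - b < m

open PowerSeries
open Finset


lemma ptwise (t i : ℕ) :
    (X : PowerSeries ℚ) ^ (i+1) * (1 - X ^ (t * (i+1))) =
      (1 - X ^ (i+1)) * ∑ j ∈ range t, X ^ ((i+1) * (j+1)) := by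
  have h := geom_sum_mul (X ^ (i+1) : PowerSeries ℚ) t
  have e2 : (X : PowerSeries ℚ) ^ (t * (i+1)) = (X ^ (i+1)) ^ t := by
    rw [mul_comm, pow_mul]
  have e3 : ∀ j, (X : PowerSeries ℚ) ^ ((i+1) * (j+1)) = (X ^ (i+1)) ^ (j+1) := fun j => pow_mul _ _ _
  rw [e2]
  simp_rw [e3]
  set y := (X : PowerSeries ℚ) ^ (i+1) with hy
  clear_value y
  have hsum : ∑ j ∈ range t, y ^ (j+1) = y * ∑ j ∈ range t, y ^ j := by
    rw [mul_sum]; exact Finset.sum_congr rfl fun j _ => by ring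
  rw [hsum]
  linear_combination y * h

lemma alg1 (t k : ℕ) :
    (X : PowerSeries ℚ) ^ (k * (k + 1) / 2) * (∏ i ∈ range k, (1 - X ^ (t * (i+1)))) =
      (∏ i ∈ range k, (1 - (X : PowerSeries ℚ) ^ (i+1))) *
        ∏ i ∈ range k, ∑ j ∈ range t, X ^ ((i+1) * (j+1)) := by
  have hsum : ∑ i ∈ range k, (i+1) = k * (k+1) / 2 := by
    have h2 := Finset.sum_range_id_mul_two k
    have : ∑ i ∈ range k, (i+1) = (∑ i ∈ range k, i) + k := by
      rw [Finset.sum_add_distrib, Finset.sum_const, card_range, smul_eq_mul, mul_one]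
    have h3 : k * (k+1) = k * (k-1) + 2 * k := by
      rcases k with _ | m
      · simp
      · simp only [Nat.succ_sub_one]; ring
    omega
  rw [← hsum, ← Finset.prod_pow_eq_pow_sum, ← Finset.prod_mul_distrib, ← Finset.prod_mul_distrib]
  exact Finset.prod_congr rfl fun i _ => ptwise t i

lemma alg2 (t k : ℕ) :
    (X : PowerSeries ℚ) ^ (k * (k + 1) / 2) * (∏ i ∈ range k, (1 - X ^ (t * (i+1)))) *
      (∏ i ∈ range k, (1 - (X : PowerSeries ℚ) ^ (i+1)))⁻¹ =
      ∏ i ∈ range k, ∑ j ∈ range t, X ^ ((i+1) * (j+1)) := by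
  set U := ∏ i ∈ range k, (1 - (X : PowerSeries ℚ) ^ (i+1)) with hU
  have hc : constantCoeff U ≠ 0 := by
    rw [hU, map_prod]
    have : ∀ i ∈ range k, constantCoeff (1 - (X : PowerSeries ℚ) ^ (i+1)) = 1 := by
      intro i _
      simp [constantCoeff_X]
    rw [Finset.prod_congr rfl this]
    simp
  rw [alg1 t k, mul_comm U _, mul_assoc, PowerSeries.mul_inv_cancel U hc, mul_one]


-- multiset sum of finset sum
lemma msum_fsum {α : Type*} {s : Finset α} (f : α → Multiset ℕ) :
    (∑ x ∈ s, f x).sum = ∑ x ∈ s, (f x).sum :=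
  map_sum Multiset.sumAddMonoidHom f s

section N
variable (k : ℕ) (c : ∀ i ∈ Finset.range k, ℕ)

/-- the multiset with `c i + ?` copies handled by caller; here multiplicity is `c i _` -/
def NN : Multiset ℕ := ∑ x ∈ (Finset.range k).attach, Multiset.replicate (c x.1 x.2) (x.1 + 1)

lemma NN_count {i : ℕ} (hi : i ∈ Finset.range k) : (NN k c).count (i+1) = c i hi := by
  rw [NN, Multiset.count_sum']
  rw [Finset.sum_eq_single (⟨i, hi⟩ : {x // x ∈ Finset.range k})]
  · simp [Multiset.count_replicate]
  · intro b _ hb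
    rw [Multiset.count_replicate, if_neg]
    intro h
    exact hb (Subtype.ext (show b.1 = i by omega))
  · intro h; exact absurd (Finset.mem_attach _ _) h

lemma NN_count_zero {a : ℕ} (ha : ∀ i, i < k → a ≠ i + 1) : (NN k c).count a = 0 := by
  rw [NN, Multiset.count_sum']
  apply Finset.sum_eq_zero
  intro x _
  rw [Multiset.count_replicate, if_neg]
  exact fun h => ha x.1 (Finset.mem_range.1 x.2) h.symm

lemma NN_mem {a : ℕ} (hc : ∀ i (hi : i ∈ Finset.range k), 0 < c i hi) :
    a ∈ NN k c ↔ ∃ i, i < k ∧ a = i + 1 := by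
  rw [← Multiset.count_pos]
  constructor
  · intro h
    by_contra hno
    push_neg at hno
    rw [NN_count_zero k c hno] at h
    omega
  · rintro ⟨i, hik, rfl⟩
    rw [NN_count k c (Finset.mem_range.2 hik)]
    exact hc i (Finset.mem_range.2 hik)

lemma NN_sum : (NN k c).sum = ∑ x ∈ (Finset.range k).attach, c x.1 x.2 * (x.1 + 1) := by
  rw [NN, msum_fsum]
  exact Finset.sum_congr rfl fun x _ => by
    rw [Multiset.sum_replicate, smul_eq_mul]

end N

-- generic multiset decomposition
lemma multiset_eq_NN (M : Multiset ℕ) (k : ℕ) (hM : ∀ a, a ∈ M ↔ ∃ i, i < k ∧ a = i + 1) :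
    M = NN k (fun i _ => M.count (i+1)) := by
  ext a
  by_cases h : ∃ i, i < k ∧ a = i + 1
  · obtain ⟨i, hik, rfl⟩ := h
    rw [NN_count _ _ (Finset.mem_range.2 hik)]
  · push_neg at h
    rw [NN_count_zero _ _ h, Multiset.count_eq_zero_of_notMem]
    intro hm
    obtain ⟨i, hik, rfl⟩ := (hM a).1 hm
    exact h i hik rfl

-- flat structure
lemma flat_down {n : ℕ} (P : n.Partition) (hf : P.IsFlat 2) :
    ∀ a, a ∈ P.parts → ∀ b, 1 ≤ b → b ≤ a → b ∈ P.parts := by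
  intro a
  induction a using Nat.strong_induction_on with
  | _ a ih =>
    intro ha b hb1 hba
    rcases eq_or_lt_of_le hba with rfl | hlt
    · exact ha
    · rcases hf a ha with h2 | ⟨c, hc, hca, hac⟩
      · omega
      · exact ih c hca hc b hb1 (by omega)

lemma flat_mem_iff {n : ℕ} (P : n.Partition) (hf : P.IsFlat 2) (a : ℕ) :
    a ∈ P.parts ↔ 1 ≤ a ∧ a ≤ P.parts.toFinset.card := by
  set S := P.parts.toFinset with hS
  set m := S.sup id with hm
  have hmem : ∀ a, a ∈ P.parts ↔ 1 ≤ a ∧ a ≤ m := by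
    intro a
    constructor
    · intro h
      exact ⟨P.parts_pos h, Finset.le_sup (f := id) (Multiset.mem_toFinset.2 h)⟩
    · rintro ⟨h1, h2⟩
      have : a ≤ S.sup id := h2
      rw [Finset.le_sup_iff (by omega : (0:ℕ) < a)] at this
      obtain ⟨b, hb, hab⟩ := this
      exact flat_down P hf b (Multiset.mem_toFinset.1 hb) a h1 hab
  have hcard : S.card = m := by
    have : S = Finset.Icc 1 m := by
      ext a
      rw [Finset.mem_Icc, hS, Multiset.mem_toFinset, hmem]
    rw [this, Nat.card_Icc]
    omega
  rw [hcard]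
  exact hmem a

lemma NN_pos (k : ℕ) (c : ∀ i ∈ Finset.range k, ℕ) (hc : ∀ i (hi : i ∈ Finset.range k), 0 < c i hi)
    {a : ℕ} (ha : a ∈ NN k c) : 0 < a := by
  obtain ⟨i, _, rfl⟩ := (NN_mem k c hc).1 ha
  omega

lemma hcomb (s : ℕ) (hs : 2 ≤ s) (n : ℕ) :
    Nat.card {P : n.Partition // P.IsDistinct s ∧ P.IsFlat 2} =
      ∑ k ∈ Finset.range (n+1), (((Finset.range k).pi fun _ => Finset.range (s-1)).filter
        (fun p => n = ∑ x ∈ (Finset.range k).attach, (x.1+1) * (p x.1 x.2 + 1))).card := by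
  classical
  rw [Nat.card_eq_fintype_card, Fintype.card_subtype, ← Finset.card_sigma]
  -- some abbreviations
  have hpos : ∀ (k : ℕ) (p : ∀ i ∈ Finset.range k, ℕ) i (hi : i ∈ Finset.range k),
      0 < p i hi + 1 := fun _ _ _ _ => Nat.succ_pos _
  refine Finset.card_bij'
    (fun P _ => ⟨P.parts.toFinset.card, fun i _ => P.parts.count (i+1) - 1⟩)
    (fun b hb => ⟨NN b.1 (fun i hi => b.2 i hi + 1), fun ha => NN_pos _ _ (hpos _ _) ha, ?_⟩)
    ?_ ?_ ?_ ?_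
  · -- parts_sum for the backward map
    obtain ⟨hb1, hb2⟩ := Finset.mem_sigma.1 hb
    obtain ⟨-, hcond⟩ := Finset.mem_filter.1 hb2
    rw [NN_sum]
    rw [hcond]
    exact Finset.sum_congr rfl fun x _ => mul_comm _ _
  · -- forward maps into sigma
    intro P hP
    obtain ⟨-, hdis, hflat⟩ := Finset.mem_filter.1 hP
    have hmem := flat_mem_iff P hflat
    set k := P.parts.toFinset.card with hk
    rw [Finset.mem_sigma]
    constructor
    · dsimp only
      rw [Finset.mem_range]
      rcases Nat.eq_zero_or_pos k with h0 | h1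
      · omega
      · have hkp : k ∈ P.parts := (hmem k).2 ⟨h1, le_refl _⟩
        have := Multiset.single_le_sum (fun x _ => Nat.zero_le x) k hkp
        rw [P.parts_sum] at this
        omega
    · dsimp only
      rw [Finset.mem_filter]
      constructor
      · rw [Finset.mem_pi]
        intro i hi
        rw [Finset.mem_range]
        have := hdis (i+1)
        omega
      · have hge : ∀ i, i < k → 1 ≤ P.parts.count (i+1) := by
          intro i hik
          have := Multiset.count_pos.2 ((hmem (i+1)).2 ⟨by omega, by omega⟩)
          omega
        have heq : P.parts = NN k (fun i _ => P.parts.count (i+1)) := by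
          apply multiset_eq_NN
          intro a
          rw [hmem a]
          constructor
          · rintro ⟨h1, h2⟩; exact ⟨a-1, by omega, by omega⟩
          · rintro ⟨i, hik, rfl⟩; omega
        have hsum := P.parts_sum
        rw [heq, NN_sum] at hsum
        refine hsum.symm.trans ?_
        apply Finset.sum_congr rfl
        intro x _
        dsimp only
        have h1 := hge x.1 (Finset.mem_range.1 x.2)
        have h2 : P.parts.count (x.1+1) - 1 + 1 = P.parts.count (x.1+1) := by omega
        rw [h2, mul_comm]
  · -- backward maps into filter
    intro b hb
    rw [Finset.mem_filter]
    refine ⟨Finset.mem_univ _, ?_, ?_⟩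
    · -- distinct
      intro a
      dsimp only
      by_cases h : ∃ i, i < b.1 ∧ a = i + 1
      · obtain ⟨i, hik, rfl⟩ := h
        show (NN b.1 _).count (i+1) < s
        rw [NN_count _ _ (Finset.mem_range.2 hik)]
        obtain ⟨hb1, hb2⟩ := Finset.mem_sigma.1 hb
        obtain ⟨hpi, -⟩ := Finset.mem_filter.1 hb2
        have := Finset.mem_range.1 (Finset.mem_pi.1 hpi i (Finset.mem_range.2 hik))
        omega
      · push_neg at h
        show (NN b.1 _).count a < s
        rw [NN_count_zero _ _ h]
        omega
    · -- flat
      intro a ha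
      dsimp only at ha ⊢
      obtain ⟨i, hik, rfl⟩ := (NN_mem _ _ (hpos _ _)).1 ha
      rcases Nat.eq_zero_or_pos i with rfl | hi1
      · left; omega
      · right
        refine ⟨i, ?_, by omega, by omega⟩
        exact (NN_mem _ _ (hpos _ _)).2 ⟨i-1, by omega, by omega⟩
  · -- left inverse
    intro P hP
    dsimp only
    obtain ⟨-, hdis, hflat⟩ := Finset.mem_filter.1 hP
    have hmem := flat_mem_iff P hflat
    ext1
    show NN (P.parts.toFinset.card) (fun i hi => Multiset.count (i + 1) P.parts - 1 + 1) = P.parts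
    have hge : ∀ i, i < P.parts.toFinset.card → 1 ≤ P.parts.count (i+1) := by
      intro i hik
      have := Multiset.count_pos.2 ((hmem (i+1)).2 ⟨by omega, by omega⟩)
      omega
    have heq : P.parts = NN P.parts.toFinset.card (fun i _ => P.parts.count (i+1)) := by
      apply multiset_eq_NN
      intro a
      rw [hmem a]
      constructor
      · rintro ⟨h1, h2⟩; exact ⟨a-1, by omega, by omega⟩
      · rintro ⟨i, hik, rfl⟩; omega
    refine Eq.trans ?_ heq.symm
    unfold NN
    apply Finset.sum_congr rfl
    intro x _
    dsimp only
    congr 1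
    have := hge x.1 (Finset.mem_range.1 x.2)
    omega
  · -- right inverse
    rintro ⟨k, p⟩ hb
    dsimp only
    have hcard : (NN k (fun i hi => p i hi + 1)).toFinset.card = k := by
      have himg : (NN k (fun i hi => p i hi + 1)).toFinset = Finset.image (· + 1) (Finset.range k) := by
        ext a
        rw [Multiset.mem_toFinset, NN_mem _ _ (hpos _ _), Finset.mem_image]
        constructor
        · rintro ⟨i, hik, rfl⟩; exact ⟨i, Finset.mem_range.2 hik, rfl⟩
        · rintro ⟨i, hik, rfl⟩; exact ⟨i, Finset.mem_range.1 hik, rfl⟩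
      rw [himg, Finset.card_image_of_injective _ (add_left_injective 1), Finset.card_range]
    refine Sigma.ext hcard ?_
    show HEq (fun i (_ : i ∈ Finset.range ((NN k (fun i hi => p i hi + 1)).toFinset.card)) =>
      (NN k (fun i hi => p i hi + 1)).count (i+1) - 1) p
    rw [hcard]
    rw [heq_iff_eq]
    funext i hi
    rw [NN_count _ _ hi]
    omega


/-- The generating function for `s`-distinct 2-flat partitions is
`∑_{k ≥ 0} q^{k(k+1)/2} (q^{s-1}; q^{s-1})_k / (q; q)_k`: the number of such
partitions of `n` is the coefficient of `q^n` in this sum.  (The term indexed by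
`k` is `O(q^{k(k+1)/2})`, so terms with `k > n` do not contribute to the
coefficient of `q^n` and the sum may be truncated at `k = n`.) -/
theorem distinct_flat_s2_genfun (s : ℕ) (hs : 2 ≤ s) (n : ℕ) :
    (Nat.card {P : n.Partition // P.IsDistinct s ∧ P.IsFlat 2} : ℚ) =
      PowerSeries.coeff n
        (∑ k ∈ Finset.range (n + 1),
          (X : PowerSeries ℚ) ^ (k * (k + 1) / 2) *
            (∏ i ∈ Finset.range k, (1 - (X : PowerSeries ℚ) ^ ((s - 1) * (i + 1)))) *
            (∏ i ∈ Finset.range k, (1 - (X : PowerSeries ℚ) ^ (i + 1)))⁻¹) := by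
  classical
  rw [map_sum]
  have step : ∀ k ∈ Finset.range (n+1),
      PowerSeries.coeff n ((X : PowerSeries ℚ) ^ (k * (k + 1) / 2) *
          (∏ i ∈ Finset.range k, (1 - (X : PowerSeries ℚ) ^ ((s - 1) * (i + 1)))) *
          (∏ i ∈ Finset.range k, (1 - (X : PowerSeries ℚ) ^ (i + 1)))⁻¹)
        = ((((Finset.range k).pi fun _ => Finset.range (s-1)).filter
            (fun p => n = ∑ x ∈ (Finset.range k).attach, (x.1+1) * (p x.1 x.2 + 1))).card : ℚ) := by
    intro k _
    rw [alg2 (s-1) k, Finset.prod_sum]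
    rw [Finset.sum_congr rfl (fun p _ => Finset.prod_pow_eq_pow_sum _ _ _)]
    rw [map_sum]
    simp_rw [PowerSeries.coeff_X_pow]
    rw [Finset.sum_boole]
  rw [Finset.sum_congr rfl step, hcomb s hs n]
  push_cast
  rfl
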